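/- Let α, β > 0 with √α + √β = √2, and let L be the real 4×4 matrix [[0,0,1,0],[0,0,0,1],[2α,0,0,2],[0,2β,−2,0]]. Then the characteristic polynomial of L equals (λ² + 2√(αβ))², so every complex eigenvalue of L is purely imaginary and nonzero, but L is not diagonalizable over ℂ. (Hence the equilibrium is spectrally stable but not linearly stable.) -/

import Mathlib

open Matrix Polynomial

/-- The linearization of the planar electromagnetic toy model at the origin. -/
noncomputable def toyL (α β : ℝ) : Matrix (Fin 4) (Fin 4) ℝ :=
  !![0, 0, 1, 0;
     0, 0, 0, 1;
     2*α, 0, 0, 2;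
     0, 2*β, -2, 0]

/-- `toyL` viewed as a complex matrix. -/
noncomputable def toyLC (α β : ℝ) : Matrix (Fin 4) (Fin 4) ℂ :=
  (toyL α β).map (algebraMap ℝ ℂ)

/-- A square complex matrix is diagonalizable if it is conjugate to a diagonal matrix. -/
def IsDiagonalizableC {N : ℕ} (A : Matrix (Fin N) (Fin N) ℂ) : Prop :=
  ∃ P : Matrix (Fin N) (Fin N) ℂ, IsUnit P ∧ (P⁻¹ * A * P).IsDiag

lemma toyL_charpoly_aux (α β : ℝ) (hkey : 4 - 2*α - 2*β = 2 * (2 * Real.sqrt (α*β)))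
    (hsq : (2 * Real.sqrt (α*β))^2 = 4*(α*β)) :
    (toyL α β).charpoly = (X^2 + C (2 * Real.sqrt (α*β)))^2 := by
  have : (toyL α β).charpoly = X^4 + C (4 - 2*α - 2*β) * X^2 + C (4*(α*β)) := by
    rw [Matrix.charpoly]
    simp [Matrix.det_succ_row_zero, Fin.sum_univ_succ, Matrix.charmatrix_apply, toyL,
      Matrix.diagonal, Fin.succAbove, map_sub, _root_.map_mul,
      _root_.map_ofNat]
    ring
  rw [this, hkey, ← hsq]
  simp only [_root_.map_mul, _root_.map_ofNat, map_sub, map_pow]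
  ring

lemma spec_sq_aux (α β s : ℝ) (hcp : (toyL α β).charpoly = (X^2 + C s)^2) :
    ∀ μ ∈ spectrum ℂ (toyLC α β), μ^2 = -(s:ℂ) := by
  have hcpc : (toyLC α β).charpoly = (X^2 + C ((s:ℝ):ℂ))^2 := by
    rw [toyLC, Matrix.charpoly_map, hcp]
    simp [Polynomial.map_pow, Polynomial.map_add, Polynomial.map_C]
  have h0 : aeval (toyLC α β) ((X^2 + C ((s:ℝ):ℂ))^2) = 0 := by
    rw [← hcpc]; exact (toyLC α β).aeval_self_charpoly
  intro μ hμ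
  have hmem : eval μ ((X^2 + C ((s:ℝ):ℂ))^2) ∈ spectrum ℂ
      (aeval (toyLC α β) ((X^2 + C ((s:ℝ):ℂ))^2)) :=
    spectrum.subset_polynomial_aeval (toyLC α β) _ ⟨μ, hμ, rfl⟩
  rw [h0, spectrum.zero_eq, Set.mem_singleton_iff] at hmem
  simp only [eval_pow, eval_add, eval_X, eval_C] at hmem
  have h2 : μ^2 + (s:ℂ) = 0 := by
    exact pow_eq_zero_iff (two_ne_zero) |>.mp hmem
  linear_combination h2

theorem stmt_3 (α β : ℝ) (hα : 0 < α) (hβ : 0 < β)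
    (h : Real.sqrt α + Real.sqrt β = Real.sqrt 2) :
    (toyL α β).charpoly = (X^2 + C (2 * Real.sqrt (α*β)))^2 ∧
    (∀ μ ∈ spectrum ℂ (toyLC α β), μ.re = 0 ∧ μ ≠ 0) ∧
    ¬ IsDiagonalizableC (toyLC α β) := by
  set s : ℝ := 2 * Real.sqrt (α*β) with hs_def
  have hab : Real.sqrt α * Real.sqrt β = Real.sqrt (α*β) := (Real.sqrt_mul hα.le β).symm
  have hA := Real.sq_sqrt hα.le
  have hB := Real.sq_sqrt hβ.le
  have e2 : (Real.sqrt α + Real.sqrt β)^2 = 2 := by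
    rw [h, Real.sq_sqrt]; norm_num
  have hsum : α + β + 2 * Real.sqrt (α*β) = 2 := by nlinarith [hab]
  have hkey : 4 - 2*α - 2*β = 2 * s := by rw [hs_def]; linarith
  have hsab : (0:ℝ) < Real.sqrt (α*β) := Real.sqrt_pos.mpr (mul_pos hα hβ)
  have hs0 : 0 < s := by positivity
  have hsq : s^2 = 4*(α*β) := by
    rw [hs_def, mul_pow, Real.sq_sqrt (mul_pos hα hβ).le]; ring
  have hcp : (toyL α β).charpoly = (X^2 + C s)^2 := toyL_charpoly_aux α β hkey hsq
  have hspec := spec_sq_aux α β s hcp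
  refine ⟨hcp, ?_, ?_⟩
  · intro μ hμ
    have hμ2 : μ^2 = -(s:ℂ) := hspec μ hμ
    have hre : μ.re*μ.re - μ.im*μ.im = -s := by
      have := congrArg Complex.re hμ2
      simpa [pow_two, Complex.mul_re] using this
    have him : μ.re*μ.im + μ.im*μ.re = 0 := by
      have := congrArg Complex.im hμ2
      simpa [pow_two, Complex.mul_im] using this
    have hre0 : μ.re = 0 := by
      rcases mul_eq_zero.mp (show μ.re * μ.im = 0 by linarith) with h1 | h1
      · exact h1
      · exfalso; rw [h1] at hre; nlinarith
    refine ⟨hre0, ?_⟩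
    rintro rfl
    have : (s:ℂ) = 0 := by linear_combination hμ2
    exact absurd (by exact_mod_cast this) hs0.ne'
  · rintro ⟨P, hP, hdiag⟩
    set A := toyLC α β with hA_def
    set D := P⁻¹ * A * P with hD_def
    have hdet : IsUnit P.det := (Matrix.isUnit_iff_isUnit_det P).mp hP
    -- spectrum of D equals spectrum of A
    have hDspec : spectrum ℂ D = spectrum ℂ A := by
      have hc := spectrum.units_conjugate' (R := ℂ) (a := A) (u := hP.unit)
      rwa [Matrix.coe_units_inv, hP.unit_spec] at hc
    have hdd : Matrix.diagonal D.diag = D := hdiag.diagonal_diag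
    have hent : ∀ i, D.diag i * D.diag i = -(s:ℂ) := by
      intro i
      have hrange : spectrum ℂ D = Set.range D.diag := by
        conv_lhs => rw [← hdd]
        rw [spectrum_diagonal]
      have hi : D.diag i ∈ spectrum ℂ A := by
        rw [← hDspec, hrange]
        exact ⟨i, rfl⟩
      have := hspec _ hi
      rwa [pow_two] at this
    have hD2 : D * D = (-(s:ℂ)) • (1 : Matrix (Fin 4) (Fin 4) ℂ) := by
      have hf : (fun i => D.diag i * D.diag i) = fun _ : Fin 4 => -(s:ℂ) := funext fun i => hent i
      rw [← hdd, Matrix.diagonal_mul_diagonal, hf, Matrix.smul_one_eq_diagonal]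
    have hAA : D * D = P⁻¹ * (A * A) * P := by
      rw [hD_def]
      simp only [Matrix.mul_assoc]
      rw [Matrix.mul_nonsing_inv_cancel_left _ _ hdet]
    have hfin : A * A = (-(s:ℂ)) • (1 : Matrix (Fin 4) (Fin 4) ℂ) := by
      have h1 : P * (D * D) * P⁻¹ = A * A := by
        rw [hAA, Matrix.mul_assoc P⁻¹, Matrix.mul_nonsing_inv_cancel_left _ _ hdet,
          Matrix.mul_nonsing_inv_cancel_right _ _ hdet]
      rw [← h1, hD2]
      rw [Matrix.mul_smul, Matrix.mul_one, Matrix.smul_mul,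
        Matrix.mul_nonsing_inv _ hdet]
    have h03 : (A * A) 0 3 = ((-(s:ℂ)) • (1 : Matrix (Fin 4) (Fin 4) ℂ)) 0 3 := by
      rw [hfin]
    have hl : (A * A) 0 3 = 2 := by
      simp [hA_def, Matrix.mul_apply, Fin.sum_univ_four, toyLC, toyL, Matrix.map_apply]
    have hr : ((-(s:ℂ)) • (1 : Matrix (Fin 4) (Fin 4) ℂ)) 0 3 = 0 := by
      simp [Matrix.one_apply]
    rw [hl, hr] at h03
    exact two_ne_zero h03
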